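/- Let R, R′ be n×p integer matrices and S, S′ be p×n integer matrices such that R ≡ R′ (mod 4) and S ≡ S′ (mod 4) entrywise. Then sgc₂(R,S) = sgc₂(R′,S′) in ℤ/2ℤ; that is, sgc₂(R,S) depends only on the entries of R and S modulo 4. -/

import Mathlib

/-- The sign-gyration polynomial `sgc₂` of a pair `(R, S)` of rectangular
integer matrices, with values in `ℤ/2ℤ`. -/
def sgc2 {n p : ℕ} (R : Matrix (Fin n) (Fin p) ℤ) (S : Matrix (Fin p) (Fin n) ℤ) : ZMod 2 :=
  (((∑ i : Fin n, ∑ j : Fin n, ∑ k : Fin p, ∑ l : Fin p,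
      if i < j ∧ l < k then R i k * S k i * R j l * S l j else 0)
    + (∑ i : Fin n, ∑ j : Fin n, ∑ k : Fin p, ∑ l : Fin p,
      if i < j ∧ l ≤ k then R i k * S k j * R j l * S l i else 0)
    + (∑ i : Fin n, ∑ k : Fin p, (R i k * (R i k - 1)) / 2 * (S k i) ^ 2) : ℤ) : ZMod 2)

private lemma modEq_sum {α : Type*} (s : Finset α) {m : ℤ} {f g : α → ℤ}
    (h : ∀ i ∈ s, f i ≡ g i [ZMOD m]) :
    (∑ i ∈ s, f i) ≡ (∑ i ∈ s, g i) [ZMOD m] := by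
  classical
  induction s using Finset.induction with
  | empty => simp
  | insert _ _ hx ih =>
    rw [Finset.sum_insert hx, Finset.sum_insert hx]
    exact (h _ (Finset.mem_insert_self _ _)).add
      (ih fun i hi => h i (Finset.mem_insert_of_mem hi))

private lemma tri_modEq {a a' : ℤ} (h : a ≡ a' [ZMOD 4]) :
    a * (a - 1) / 2 ≡ a' * (a' - 1) / 2 [ZMOD 2] := by
  obtain ⟨t, ht⟩ := (Int.modEq_iff_dvd.mp h)
  have ha' : a' = a + 4 * t := by linarith
  have he : Even (a * (a - 1)) := by
    rcases Int.even_or_odd a with he | ho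
    · exact he.mul_right _
    · exact (Int.even_sub_one.mpr (by simpa using ho.pow (n := 1))).mul_left _
  obtain ⟨m, hm⟩ := he
  have h1 : a * (a - 1) / 2 = m := by omega
  have h2 : a' * (a' - 1) / 2 = m + (2 * t * (2 * a - 1) + 8 * t ^ 2) := by
    have : a' * (a' - 1) = 2 * (m + (2 * t * (2 * a - 1) + 8 * t ^ 2)) := by
      rw [ha']; ring_nf; nlinarith [hm]
    omega
  rw [h1, h2]
  exact (Int.modEq_iff_dvd.mpr ⟨t * (2 * a - 1) + 4 * t ^ 2, by ring⟩)

/-- `sgc₂(R,S)` depends only on the entries of `R` and `S` modulo 4. -/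
theorem sgc2_depends_only_mod_four {n p : ℕ}
    (R R' : Matrix (Fin n) (Fin p) ℤ) (S S' : Matrix (Fin p) (Fin n) ℤ)
    (hR : ∀ i k, R i k ≡ R' i k [ZMOD 4]) (hS : ∀ k i, S k i ≡ S' k i [ZMOD 4]) :
    sgc2 R S = sgc2 R' S' := by
  have hR2 : ∀ i k, R i k ≡ R' i k [ZMOD 2] := fun i k => (hR i k).of_dvd (by norm_num)
  have hS2 : ∀ k i, S k i ≡ S' k i [ZMOD 2] := fun k i => (hS k i).of_dvd (by norm_num)
  unfold sgc2
  rw [ZMod.intCast_eq_intCast_iff]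
  refine Int.ModEq.add (Int.ModEq.add ?_ ?_) ?_
  · refine modEq_sum _ fun i _ => modEq_sum _ fun j _ => modEq_sum _ fun k _ =>
      modEq_sum _ fun l _ => ?_
    split_ifs
    · exact (((hR2 i k).mul (hS2 k i)).mul (hR2 j l)).mul (hS2 l j)
    · rfl
  · refine modEq_sum _ fun i _ => modEq_sum _ fun j _ => modEq_sum _ fun k _ =>
      modEq_sum _ fun l _ => ?_
    split_ifs
    · exact (((hR2 i k).mul (hS2 k j)).mul (hR2 j l)).mul (hS2 l i)
    · rfl
  · refine modEq_sum _ fun i _ => modEq_sum _ fun k _ => ?_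
    exact (tri_modEq (hR i k)).mul ((hS2 k i).pow 2)
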